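/- Let A be a C*-algebra and D a C*-subalgebra containing an approximate unit for A. If a ∈ A normalizes D (i.e., a*Da + aDa* ⊆ D), then a*a ∈ D and aa* ∈ D. -/
import Mathlib


open Filter Topology

/-- if `D` is a nondegenerate C*-subalgebra of `A` (i.e. `D` contains an
approximate unit for `A`) and `a` normalizes `D`, then `a*a ∈ D` and `aa* ∈ D`. -/
theorem normalizer_star_self_mem {A : Type*} [NonUnitalCStarAlgebra A]
    [PartialOrder A] [StarOrderedRing A]
    (D : NonUnitalStarSubalgebra ℂ A) (hD : IsClosed (D : Set A))
    (hunit : ∃ (ι : Type) (l : Filter ι) (u : ι → A), l.NeBot ∧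
      (∀ i, u i ∈ D ∧ 0 ≤ u i ∧ ‖u i‖ ≤ 1) ∧
      ∀ x : A, Tendsto (fun i => ‖u i * x - x‖) l (𝓝 0))
    (a : A) (ha : ∀ d ∈ D, star a * d * a ∈ D ∧ a * d * star a ∈ D) :
    star a * a ∈ D ∧ a * star a ∈ D := by
  obtain ⟨ι, l, u, hne, hu, htend⟩ := hunit
  constructor
  · have h1 : Tendsto (fun i => u i * a) l (𝓝 a) :=
      tendsto_iff_norm_sub_tendsto_zero.2 (htend a)
    have h2 : Tendsto (fun i => star a * (u i * a)) l (𝓝 (star a * a)) :=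
      (continuous_mul_left (star a)).continuousAt.tendsto.comp h1
    exact hD.mem_of_tendsto h2 (Eventually.of_forall fun i => by
      simpa [mul_assoc] using (ha (u i) (hu i).1).1)
  · have h1 : Tendsto (fun i => u i * star a) l (𝓝 (star a)) :=
      tendsto_iff_norm_sub_tendsto_zero.2 (htend (star a))
    have h2 : Tendsto (fun i => a * (u i * star a)) l (𝓝 (a * star a)) :=
      (continuous_mul_left a).continuousAt.tendsto.comp h1
    exact hD.mem_of_tendsto h2 (Eventually.of_forall fun i => by
      simpa [mul_assoc] using (ha (u i) (hu i).1).2)
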